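/- arXiv:2006.07052 — 2 statements merged into one kernel-verified Lean document; each statement's English description precedes it below -/
import Mathlib

section
/- For positive reals k, l, m and c₁ > 0 and a probability measure Beta(1, k+l+m) on (0,1), Jensen's inequality gives: ∫₀¹ (1-ρ)^{k+l+m-1} g(ρ) dρ ≥ (1/(k+l+m)) · g(1/(k+l+m+1)), where g(ρ) = (1/ρ)(1 − 1/(1+c₁ρ)^{k+l}) is convex on (0,1). -/
open MeasureTheory Set

private lemma convexOn_rpow_neg {p : ℝ} (hp : 0 ≤ p) :
    ConvexOn ℝ (Set.Ioi (0:ℝ)) (fun x : ℝ => x ^ (-p)) := by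
  apply convexOn_of_hasDerivWithinAt2_nonneg (f' := fun x => (-p) * x ^ (-p - 1))
    (f'' := fun x => (-p) * ((-p - 1) * x ^ (-p - 1 - 1))) (convex_Ioi 0)
  · intro x hx
    exact (Real.continuousAt_rpow_const x (-p) (Or.inl (ne_of_gt hx))).continuousWithinAt
  · intro x hx
    rw [interior_Ioi] at hx
    simpa [mul_comm] using
      (Real.hasDerivAt_rpow_const (p := -p) (Or.inl (ne_of_gt hx))).hasDerivWithinAt
  · intro x hx
    rw [interior_Ioi] at hx
    exact ((Real.hasDerivAt_rpow_const (p := -p - 1)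
      (Or.inl (ne_of_gt hx))).const_mul (-p)).hasDerivWithinAt
  · intro x hx
    rw [interior_Ioi] at hx
    have h1 : (0:ℝ) ≤ x ^ (-p - 1 - 1) := Real.rpow_nonneg hx.le _
    nlinarith [mul_nonneg (mul_nonneg hp (by linarith : (0:ℝ) ≤ p + 1)) h1]

private lemma cont_kernel {c q ρ : ℝ} (hc : 0 < c) (hρ : 0 < ρ) :
    ContinuousOn (fun t : ℝ => q * c * (1 + c * ρ * t) ^ (-(q+1))) (Set.Icc 0 1) := by
  have hbase : ∀ t ∈ Set.Icc (0:ℝ) 1, 1 + c * ρ * t ≠ 0 := by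
    intro t ht
    nlinarith [ht.1, mul_pos hc hρ]
  exact continuousOn_const.mul
    (((continuous_const.add (continuous_const.mul continuous_id)).continuousOn).rpow_const
      fun t ht => Or.inl (hbase t ht))

private lemma rep_integral {c q ρ : ℝ} (hc : 0 < c) (hρ : 0 < ρ) :
    ∫ t in (0:ℝ)..1, q * c * (1 + c * ρ * t) ^ (-(q+1))
      = (1/ρ) * (1 - (1 + c * ρ) ^ (-q)) := by
  have huIcc : Set.uIcc (0:ℝ) 1 = Set.Icc 0 1 := Set.uIcc_of_le (by norm_num)
  have hbase : ∀ t ∈ Set.uIcc (0:ℝ) 1, 0 < 1 + c * ρ * t := by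
    intro t ht
    rw [huIcc] at ht
    nlinarith [ht.1, mul_pos hc hρ]
  have hderiv : ∀ t ∈ Set.uIcc (0:ℝ) 1,
      HasDerivAt (fun t => -(1/ρ) * (1 + c * ρ * t) ^ (-q))
        (q * c * (1 + c * ρ * t) ^ (-(q+1))) t := by
    intro t ht
    have h1 : HasDerivAt (fun t : ℝ => 1 + c * ρ * t) (c * ρ) t := by
      simpa using ((hasDerivAt_id t).const_mul (c * ρ)).const_add 1
    have h2 := (Real.hasDerivAt_rpow_const (p := -q)
      (Or.inl (hbase t ht).ne')).comp t h1
    have h3 := h2.const_mul (-(1/ρ))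
    refine h3.congr_deriv ?_
    rw [show -q - 1 = -(q+1) by ring]
    field_simp
  have hint : IntervalIntegrable (fun t => q * c * (1 + c * ρ * t) ^ (-(q+1))) volume 0 1 := by
    apply ContinuousOn.intervalIntegrable
    rw [huIcc]
    exact cont_kernel hc hρ
  rw [intervalIntegral.integral_eq_sub_of_hasDerivAt hderiv hint]
  have h0 : (1 : ℝ) + c * ρ * 0 = 1 := by ring
  have h1 : (1 : ℝ) + c * ρ * 1 = 1 + c * ρ := by ring
  rw [h0, h1, Real.one_rpow]
  ring

private lemma g_convex {c q : ℝ} (hc : 0 < c) (hq : 0 < q) :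
    ConvexOn ℝ (Set.Ioo (0:ℝ) 1) (fun ρ => (1/ρ) * (1 - (1 + c * ρ) ^ (-q))) := by
  refine ⟨convex_Ioo _ _, ?_⟩
  intro x hx y hy a b ha hb hab
  simp only [smul_eq_mul]
  have hz : 0 < a * x + b * y := by
    rcases eq_or_lt_of_le ha with h | h
    · have hb1 : b = 1 := by linarith
      rw [← h, hb1]; simpa using hy.1
    · nlinarith [mul_nonneg hb hy.1.le, hx.1]
  rw [← rep_integral hc hx.1, ← rep_integral hc hy.1, ← rep_integral hc hz]
  have hintx : IntervalIntegrable (fun t => q * c * (1 + c * x * t) ^ (-(q+1))) volume 0 1 :=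
    ContinuousOn.intervalIntegrable (by rw [Set.uIcc_of_le (by norm_num : (0:ℝ) ≤ 1)]; exact cont_kernel hc hx.1)
  have hinty : IntervalIntegrable (fun t => q * c * (1 + c * y * t) ^ (-(q+1))) volume 0 1 :=
    ContinuousOn.intervalIntegrable (by rw [Set.uIcc_of_le (by norm_num : (0:ℝ) ≤ 1)]; exact cont_kernel hc hy.1)
  have hintz : IntervalIntegrable (fun t => q * c * (1 + c * (a*x+b*y) * t) ^ (-(q+1))) volume 0 1 :=
    ContinuousOn.intervalIntegrable (by rw [Set.uIcc_of_le (by norm_num : (0:ℝ) ≤ 1)]; exact cont_kernel hc hz)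
  calc ∫ t in (0:ℝ)..1, q * c * (1 + c * (a*x+b*y) * t) ^ (-(q+1))
      ≤ ∫ t in (0:ℝ)..1, (a * (q * c * (1 + c * x * t) ^ (-(q+1)))
          + b * (q * c * (1 + c * y * t) ^ (-(q+1)))) := by
        apply intervalIntegral.integral_mono_on (by norm_num) hintz
          ((hintx.const_mul a).add (hinty.const_mul b))
        intro t ht
        have hu : (1 + c * x * t) ∈ Set.Ioi (0:ℝ) := by
          simp only [Set.mem_Ioi]; nlinarith [ht.1, mul_pos hc hx.1]
        have hv : (1 + c * y * t) ∈ Set.Ioi (0:ℝ) := by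
          simp only [Set.mem_Ioi]; nlinarith [ht.1, mul_pos hc hy.1]
        have hcv := (convexOn_rpow_neg (by linarith : (0:ℝ) ≤ q + 1)).2 hu hv ha hb hab
        simp only [smul_eq_mul] at hcv
        have heq : a * (1 + c * x * t) + b * (1 + c * y * t) = 1 + c * (a*x+b*y) * t := by
          have : a + b = 1 := hab
          nlinarith [this]
        rw [heq] at hcv
        have hqc : (0:ℝ) ≤ q * c := by positivity
        calc q * c * (1 + c * (a*x+b*y) * t) ^ (-(q+1))
            ≤ q * c * (a * (1 + c * x * t) ^ (-(q+1)) + b * (1 + c * y * t) ^ (-(q+1))) :=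
              mul_le_mul_of_nonneg_left hcv hqc
          _ = a * (q * c * (1 + c * x * t) ^ (-(q+1)))
              + b * (q * c * (1 + c * y * t) ^ (-(q+1))) := by ring
    _ = a * (∫ t in (0:ℝ)..1, q * c * (1 + c * x * t) ^ (-(q+1)))
        + b * (∫ t in (0:ℝ)..1, q * c * (1 + c * y * t) ^ (-(q+1))) := by
        rw [intervalIntegral.integral_add (hintx.const_mul a) (hinty.const_mul b)]
        simp only [intervalIntegral.integral_const_mul]

private lemma support_line {f : ℝ → ℝ} {x₀ : ℝ} (hf : ConvexOn ℝ (Set.Ioo (0:ℝ) 1) f)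
    (hx₀ : x₀ ∈ Set.Ioo (0:ℝ) 1) :
    ∃ b : ℝ, ∀ x ∈ Set.Ioo (0:ℝ) 1, f x₀ + b * (x - x₀) ≤ f x := by
  obtain ⟨hx₀0, hx₀1⟩ := hx₀
  set S := (fun x => (f x - f x₀) / (x - x₀)) '' Set.Ioo 0 x₀ with hS
  set w : ℝ := (x₀ + 1) / 2 with hw
  have hwmem : w ∈ Set.Ioo (0:ℝ) 1 := ⟨by positivity, by simp only [hw]; linarith⟩
  have hwx₀ : x₀ < w := by simp only [hw]; linarith
  have hne : S.Nonempty :=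
    ⟨(f (x₀/2) - f x₀) / (x₀/2 - x₀),
      Set.mem_image_of_mem _ (⟨by positivity, by linarith⟩ : x₀/2 ∈ Set.Ioo 0 x₀)⟩
  have hub : ∀ z ∈ S, z ≤ (f w - f x₀) / (w - x₀) := by
    rintro z ⟨x, hx, rfl⟩
    exact hf.secant_mono ⟨hx₀0, hx₀1⟩ ⟨hx.1, by linarith [hx.2]⟩ hwmem
      (ne_of_lt hx.2) (ne_of_gt hwx₀) (by linarith [hx.2])
  have hbdd : BddAbove S := ⟨_, hub⟩
  refine ⟨sSup S, ?_⟩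
  intro x hx
  rcases lt_trichotomy x x₀ with h | h | h
  · have hle : (f x - f x₀) / (x - x₀) ≤ sSup S :=
      le_csSup hbdd ⟨x, ⟨hx.1, h⟩, rfl⟩
    rw [div_le_iff_of_neg (by linarith : x - x₀ < 0)] at hle
    linarith
  · rw [h]; simp
  · have hle : sSup S ≤ (f x - f x₀) / (x - x₀) := by
      apply csSup_le hne
      rintro z ⟨u, hu, rfl⟩
      exact hf.secant_mono ⟨hx₀0, hx₀1⟩ ⟨hu.1, by linarith [hu.2]⟩ hx
        (ne_of_lt hu.2) (ne_of_gt h) (by linarith [hu.2])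
    rw [le_div_iff₀ (by linarith : 0 < x - x₀)] at hle
    linarith

private lemma g_nonneg {c q ρ : ℝ} (hc : 0 < c) (hq : 0 < q) (hρ : 0 < ρ) :
    0 ≤ (1/ρ) * (1 - (1 + c * ρ) ^ (-q)) := by
  have h1 : (1 + c * ρ) ^ (-q) ≤ 1 :=
    Real.rpow_le_one_of_one_le_of_nonpos (by nlinarith) (by linarith)
  have h2 : (0:ℝ) ≤ 1/ρ := by positivity
  nlinarith

private lemma g_le {c q ρ : ℝ} (hc : 0 < c) (hq : 0 < q) (hρ : 0 < ρ) :
    (1/ρ) * (1 - (1 + c * ρ) ^ (-q)) ≤ q * c := by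
  have hv : (0:ℝ) < 1 + c * ρ := by nlinarith
  have h1 : (1 + c * ρ) ^ (-q) = Real.exp (Real.log (1 + c * ρ) * (-q)) :=
    Real.rpow_def_of_pos hv _
  have h2 : Real.log (1 + c * ρ) * (-q) + 1 ≤ Real.exp (Real.log (1 + c * ρ) * (-q)) :=
    Real.add_one_le_exp _
  have h3 : Real.log (1 + c * ρ) ≤ c * ρ := by
    have := Real.log_le_sub_one_of_pos hv; linarith
  have key : 1 - (1 + c * ρ) ^ (-q) ≤ q * (c * ρ) := by
    rw [h1]
    nlinarith [mul_le_mul_of_nonneg_left h3 hq.le]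
  calc (1/ρ) * (1 - (1 + c * ρ) ^ (-q)) ≤ (1/ρ) * (q * (c * ρ)) :=
        mul_le_mul_of_nonneg_left key (by positivity)
    _ = q * c := by field_simp

private lemma integrableOn_rpow_one_sub {r : ℝ} (hr : -1 < r) :
    IntegrableOn (fun ρ : ℝ => (1 - ρ) ^ r) (Set.Ioo 0 1) volume := by
  have h1 : IntervalIntegrable (fun x : ℝ => x ^ r) volume 1 0 :=
    intervalIntegral.intervalIntegrable_rpow' hr
  have h2 := h1.comp_sub_left 1
  simp only [sub_self, sub_zero] at h2
  -- h2 : IntervalIntegrable (fun x => (1 - x) ^ r) volume 0 1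
  rw [intervalIntegrable_iff_integrableOn_Ioc_of_le (by norm_num : (0:ℝ) ≤ 1)] at h2
  exact h2.mono_set Set.Ioo_subset_Ioc_self

private lemma J_rpow {r : ℝ} (hr : -1 < r) :
    ∫ ρ in Set.Ioo (0:ℝ) 1, (1 - ρ) ^ r = 1 / (r + 1) := by
  rw [← MeasureTheory.integral_Ioc_eq_integral_Ioo,
    ← intervalIntegral.integral_of_le (by norm_num : (0:ℝ) ≤ 1)]
  rw [show (fun ρ : ℝ => (1 - ρ) ^ r) = (fun ρ : ℝ => ((fun x : ℝ => x ^ r) (1 - ρ))) from rfl]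
  rw [intervalIntegral.integral_comp_sub_left (fun x : ℝ => x ^ r) 1]
  norm_num
  rw [integral_rpow (Or.inl hr)]
  rw [Real.one_rpow, Real.zero_rpow (by linarith : r + 1 ≠ 0)]
  norm_num

private lemma main_aux {c q n : ℝ} (hc : 0 < c) (hq : 0 < q) (hn : 0 < n) :
    ∫ ρ in Set.Ioo (0:ℝ) 1, (1 - ρ) ^ (n - 1) * ((1/ρ) * (1 - (1 + c * ρ) ^ (-q)))
      ≥ (1/n) * ((1/(1/(n+1))) * (1 - (1 + c * (1/(n+1))) ^ (-q))) := by
  set g : ℝ → ℝ := fun ρ => (1/ρ) * (1 - (1 + c * ρ) ^ (-q)) with hgdef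
  set ρ₀ : ℝ := 1/(n+1) with hρ₀def
  have hρ₀mem : ρ₀ ∈ Set.Ioo (0:ℝ) 1 := by
    constructor
    · rw [hρ₀def]; positivity
    · rw [hρ₀def, div_lt_one (by linarith)]; linarith
  obtain ⟨b, hb⟩ := support_line (g_convex hc hq) hρ₀mem
  have hw_int : IntegrableOn (fun ρ : ℝ => (1 - ρ) ^ (n-1)) (Set.Ioo 0 1) volume :=
    integrableOn_rpow_one_sub (by linarith)
  have hwn_int : IntegrableOn (fun ρ : ℝ => (1 - ρ) ^ n) (Set.Ioo 0 1) volume :=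
    integrableOn_rpow_one_sub (by linarith)
  have hline_eq : ∀ ρ ∈ Set.Ioo (0:ℝ) 1,
      (1 - ρ) ^ (n-1) * (g ρ₀ + b * (ρ - ρ₀))
        = (g ρ₀ + b * (1 - ρ₀)) * (1 - ρ) ^ (n-1) - b * (1 - ρ) ^ n := by
    intro ρ hρ
    have h1ρ : (0:ℝ) < 1 - ρ := by linarith [hρ.2]
    have hpow : (1 - ρ) ^ (n-1) * (1 - ρ) = (1 - ρ) ^ n := by
      rw [← Real.rpow_add_one h1ρ.ne' (n-1)]; norm_num
    rw [← hpow]; ring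
  have hcontg : ContinuousOn g (Set.Ioo (0:ℝ) 1) := by
    intro ρ hρ
    apply ContinuousAt.continuousWithinAt
    have h1 : ContinuousAt (fun ρ : ℝ => 1/ρ) ρ :=
      continuousAt_const.div continuousAt_id (ne_of_gt hρ.1)
    have h2 : ContinuousAt (fun ρ : ℝ => (1 + c * ρ) ^ (-q)) ρ :=
      ContinuousAt.rpow_const (by fun_prop) (Or.inl (by nlinarith [hρ.1]))
    exact h1.mul (continuousAt_const.sub h2)
  have hcontw : ContinuousOn (fun ρ : ℝ => (1 - ρ) ^ (n-1)) (Set.Ioo (0:ℝ) 1) := by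
    intro ρ hρ
    apply ContinuousAt.continuousWithinAt
    exact ContinuousAt.rpow_const (by fun_prop)
      (Or.inl (by linarith [hρ.2] : (1:ℝ) - ρ ≠ 0))
  have h_main_int : IntegrableOn (fun ρ : ℝ => (1 - ρ) ^ (n-1) * g ρ) (Set.Ioo 0 1) volume := by
    apply Integrable.mono' (hw_int.const_mul (q * c))
      ((hcontw.mul hcontg).aestronglyMeasurable measurableSet_Ioo)
    rw [ae_restrict_iff' measurableSet_Ioo]
    filter_upwards with ρ hρ
    have hw0 : (0:ℝ) ≤ (1 - ρ) ^ (n-1) := Real.rpow_nonneg (by linarith [hρ.2]) _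
    have hg0 : 0 ≤ g ρ := g_nonneg hc hq hρ.1
    have hg1 : g ρ ≤ q * c := g_le hc hq hρ.1
    simp only [Pi.mul_apply]
    rw [Real.norm_eq_abs, abs_of_nonneg (mul_nonneg hw0 hg0)]
    nlinarith [mul_le_mul_of_nonneg_left hg1 hw0]
  have hφ_int : IntegrableOn
      (fun ρ : ℝ => (g ρ₀ + b * (1 - ρ₀)) * (1 - ρ) ^ (n-1) - b * (1 - ρ) ^ n)
      (Set.Ioo 0 1) volume :=
    (hw_int.const_mul _).sub (hwn_int.const_mul _)
  have hline_int : IntegrableOn (fun ρ : ℝ => (1 - ρ) ^ (n-1) * (g ρ₀ + b * (ρ - ρ₀)))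
      (Set.Ioo 0 1) volume :=
    hφ_int.congr_fun (fun ρ hρ => (hline_eq ρ hρ).symm) measurableSet_Ioo
  have step1 : ∫ ρ in Set.Ioo (0:ℝ) 1, (1 - ρ) ^ (n-1) * (g ρ₀ + b * (ρ - ρ₀))
      ≤ ∫ ρ in Set.Ioo (0:ℝ) 1, (1 - ρ) ^ (n-1) * g ρ := by
    apply setIntegral_mono_on hline_int h_main_int measurableSet_Ioo
    intro ρ hρ
    exact mul_le_mul_of_nonneg_left (hb ρ hρ) (Real.rpow_nonneg (by linarith [hρ.2]) _)
  have step2 : ∫ ρ in Set.Ioo (0:ℝ) 1, (1 - ρ) ^ (n-1) * (g ρ₀ + b * (ρ - ρ₀))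
      = (1/n) * g ρ₀ := by
    rw [setIntegral_congr_fun measurableSet_Ioo hline_eq]
    rw [integral_sub (hw_int.const_mul _) (hwn_int.const_mul _),
      integral_const_mul, integral_const_mul, J_rpow (by linarith), J_rpow (by linarith)]
    have h1 : n - 1 + 1 = n := by ring
    rw [h1, hρ₀def]
    field_simp
    ring
  have : (1/n) * ((1/ρ₀) * (1 - (1 + c * ρ₀) ^ (-q))) = (1/n) * g ρ₀ := rfl
  rw [this]
  calc (1/n) * g ρ₀ = _ := step2.symm
    _ ≤ _ := step1

theorem stmt_12 (k l m c₁ : ℝ) (hk : 0 < k) (hl : 0 < l) (hm : 0 < m) (hc : 0 < c₁) :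
    ∫ ρ in Set.Ioo (0:ℝ) 1,
        (1 - ρ) ^ (k + l + m - 1) * ((1 / ρ) * (1 - 1 / (1 + c₁ * ρ) ^ (k + l)))
      ≥ (1 / (k + l + m)) *
        ((1 / (1 / (k + l + m + 1))) * (1 - 1 / (1 + c₁ * (1 / (k + l + m + 1))) ^ (k + l))) := by
  have hq : 0 < k + l := by linarith
  have hn : 0 < k + l + m := by linarith
  have key := main_aux (c := c₁) (q := k + l) (n := k + l + m) hc hq hn
  have hrw : ∀ ρ : ℝ, 0 < ρ → (1 + c₁ * ρ) ^ (-(k+l)) = 1 / (1 + c₁ * ρ) ^ (k + l) := by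
    intro ρ hρ
    rw [Real.rpow_neg (by nlinarith), one_div]
  have hgoalL : ∫ ρ in Set.Ioo (0:ℝ) 1,
        (1 - ρ) ^ (k + l + m - 1) * ((1 / ρ) * (1 - 1 / (1 + c₁ * ρ) ^ (k + l)))
      = ∫ ρ in Set.Ioo (0:ℝ) 1,
        (1 - ρ) ^ (k + l + m - 1) * ((1 / ρ) * (1 - (1 + c₁ * ρ) ^ (-(k+l)))) := by
    apply setIntegral_congr_fun measurableSet_Ioo
    intro ρ hρ
    simp only []
    rw [hrw ρ hρ.1]
  rw [hgoalL, ← hrw _ (by positivity : (0:ℝ) < 1 / (k + l + m + 1))]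
  exact key
end

section
/- Let n₁ = 2, p ≥ 1, and 0 ≤ a < p/2. Then equality/inequality in the dominance condition reduces to: (p/2 − a)/(1 + p/2) ≤ ∫₀¹ (1-ρ)^{1+p/2}/ρ · (1 − 1/(1+(p/2−a)ρ)²) dρ, and this inequality holds (with equality iff a = 0). -/
open MeasureTheory Set

lemma cont_pow (p : ℝ) (hp : 0 ≤ p) : Continuous fun ρ : ℝ => (1 - ρ) ^ p :=
  (continuous_const.sub continuous_id).rpow_const (fun _ => Or.inr hp)

lemma cont_phi (c : ℝ) (hc : 0 < c) :
    ContinuousOn (fun ρ : ℝ => c * (2 + c * ρ) / (1 + c * ρ) ^ (2:ℕ)) (Icc (0:ℝ) 1) := by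
  apply ContinuousOn.div
  · fun_prop
  · fun_prop
  · intro x hx
    have : (0:ℝ) < 1 + c * x := by nlinarith [hx.1]
    positivity

lemma hasDerivAt_one_sub (p : ℝ) (hp : 1 ≤ p) (ρ : ℝ) :
    HasDerivAt (fun ρ : ℝ => (1 - ρ) ^ p) (-(p * (1 - ρ) ^ (p - 1))) ρ := by
  have h := (Real.hasDerivAt_rpow_const (x := 1 - ρ) (p := p) (Or.inr hp)).comp ρ
    ((hasDerivAt_id ρ).const_sub 1)
  refine h.congr_deriv ?_
  simp

lemma integral_one_sub_rpow (s : ℝ) (hs : 0 ≤ s) :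
    ∫ ρ in Ioo (0:ℝ) 1, (1 - ρ) ^ s = 1 / (s + 1) := by
  have hs1 : (0:ℝ) < s + 1 := by linarith
  have key : ∫ ρ in (0:ℝ)..1, (1 - ρ) ^ s = 1 / (s + 1) := by
    have hd : ∀ x ∈ uIcc (0:ℝ) 1,
        HasDerivAt (fun ρ : ℝ => -(1 - ρ) ^ (s + 1) / (s + 1)) ((1 - x) ^ s) x := by
      intro x _
      have h := ((hasDerivAt_one_sub (s + 1) (by linarith) x).neg).div_const (s + 1)
      refine h.congr_deriv ?_
      have : s + 1 - 1 = s := by ring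
      rw [this]
      field_simp
    rw [intervalIntegral.integral_eq_sub_of_hasDerivAt hd
      ((cont_pow s hs).intervalIntegrable 0 1)]
    simp [Real.zero_rpow (ne_of_gt hs1), Real.one_rpow]
    ring
  rw [← integral_Ioc_eq_integral_Ioo, ← intervalIntegral.integral_of_le zero_le_one]
  exact key

lemma integral_phi (c : ℝ) (hc : 0 < c) :
    ∫ ρ in Ioo (0:ℝ) 1, (1 - ρ) ^ (c + 1) * (c * (2 + c * ρ) / (1 + c * ρ) ^ (2:ℕ))
      = c / (c + 1) := by
  have hc1 : (0:ℝ) < c + 1 := by linarith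
  have key : ∫ ρ in (0:ℝ)..1, (1 - ρ) ^ (c + 1) * (c * (2 + c * ρ) / (1 + c * ρ) ^ (2:ℕ))
      = c / (c + 1) := by
    set F : ℝ → ℝ := fun ρ => -(c / (c + 1)) * ((1 - ρ) ^ (c + 2) * (1 + c * ρ)⁻¹) with hF
    have hd : ∀ x ∈ uIcc (0:ℝ) 1,
        HasDerivAt F ((1 - x) ^ (c + 1) * (c * (2 + c * x) / (1 + c * x) ^ (2:ℕ))) x := by
      intro x hx
      rw [uIcc_of_le zero_le_one] at hx
      have hu : (0:ℝ) < 1 + c * x := by nlinarith [hx.1]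
      have h1 : HasDerivAt (fun ρ : ℝ => (1 + c * ρ)⁻¹) (-c / (1 + c * x) ^ (2:ℕ)) x := by
        have := (((hasDerivAt_id x).const_mul c).const_add 1).inv (ne_of_gt hu)
        refine this.congr_deriv ?_
        simp
      have h2 := ((hasDerivAt_one_sub (c + 2) (by linarith) x).mul h1).const_mul (-(c / (c + 1)))
      refine h2.congr_deriv ?_
      have he : c + 2 - 1 = c + 1 := by ring
      rw [he]
      have hfact : (1 - x) ^ (c + 2) = (1 - x) * (1 - x) ^ (c + 1) := by
        rcases eq_or_lt_of_le hx.2 with h | h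
        · rw [← h]
          simp [Real.zero_rpow (by positivity : c + 2 ≠ 0),
            Real.zero_rpow (by positivity : c + 1 ≠ 0)]
        · have hb : (0:ℝ) < 1 - x := by linarith
          rw [show c + 2 = (c + 1) + 1 by ring, Real.rpow_add_one (ne_of_gt hb)]
          ring
      rw [hfact]
      field_simp
      ring
    have hint : IntervalIntegrable
        (fun ρ : ℝ => (1 - ρ) ^ (c + 1) * (c * (2 + c * ρ) / (1 + c * ρ) ^ (2:ℕ)))
        volume 0 1 := by
      apply ContinuousOn.intervalIntegrable
      rw [uIcc_of_le zero_le_one]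
      exact ((cont_pow (c + 1) (by linarith)).continuousOn).mul (cont_phi c hc)
    rw [intervalIntegral.integral_eq_sub_of_hasDerivAt hd hint]
    simp [hF, Real.zero_rpow (by positivity : c + 2 ≠ 0), Real.one_rpow]
  rw [← integral_Ioc_eq_integral_Ioo, ← intervalIntegral.integral_of_le zero_le_one]
  exact key

lemma phi_anti (c : ℝ) (hc : 0 < c) {x y : ℝ} (hx : 0 ≤ x) (hxy : x ≤ y) :
    c * (2 + c * y) / (1 + c * y) ^ (2:ℕ) ≤ c * (2 + c * x) / (1 + c * x) ^ (2:ℕ) := by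
  have hux : (0:ℝ) < 1 + c * x := by nlinarith
  have huy : (0:ℝ) < 1 + c * y := by nlinarith
  rw [div_le_div_iff₀ (by positivity) (by positivity)]
  have key : c * (2 + c * x) * (1 + c * y) ^ (2:ℕ) - c * (2 + c * y) * (1 + c * x) ^ (2:ℕ)
      = c ^ 2 * (y - x) * (3 + 2 * (c * x + c * y) + (c * x) * (c * y)) := by ring
  have h1 : 0 ≤ c ^ 2 * (y - x) * (3 + 2 * (c * x + c * y) + (c * x) * (c * y)) := by
    apply mul_nonneg (mul_nonneg (by positivity) (by linarith))
    have hy : 0 ≤ y := hx.trans hxy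
    nlinarith [mul_nonneg hc.le hx, mul_nonneg hc.le hy,
      mul_nonneg (mul_nonneg hc.le hx) (mul_nonneg hc.le hy)]
  linarith

theorem stmt_14 (m c : ℝ) (hm : 0 < m) (hc : 0 < c) (hcm : c ≤ m) :
    ∫ ρ in Set.Ioo (0:ℝ) 1,
        (1 - ρ) ^ (m + 1) / ρ * (1 - 1 / (1 + c * ρ) ^ (2:ℕ)) ≥ c / (m + 1) := by
  set φ : ℝ → ℝ := fun ρ => c * (2 + c * ρ) / (1 + c * ρ) ^ (2:ℕ) with hφ
  have hA : ∫ ρ in Set.Ioo (0:ℝ) 1,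
      (1 - ρ) ^ (m + 1) / ρ * (1 - 1 / (1 + c * ρ) ^ (2:ℕ))
      = ∫ ρ in Ioo (0:ℝ) 1, (1 - ρ) ^ (m + 1) * φ ρ := by
    apply setIntegral_congr_fun measurableSet_Ioo
    intro ρ hρ
    have h0 : ρ ≠ 0 := ne_of_gt hρ.1
    have hu : (0:ℝ) < 1 + c * ρ := by nlinarith [hρ.1.le]
    have hu' : (1 + c * ρ) ≠ 0 := hu.ne'
    simp only [hφ]
    rw [one_sub_div (pow_ne_zero 2 hu')]
    field_simp
    ring
  rw [hA]
  -- integrability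
  have intφm : IntegrableOn (fun ρ => (1 - ρ) ^ (m + 1) * φ ρ) (Ioo (0:ℝ) 1) volume :=
    ((((cont_pow (m + 1) (by linarith)).continuousOn).mul (cont_phi c hc)).integrableOn_Icc).mono_set
      Ioo_subset_Icc_self
  have intφc : IntegrableOn (fun ρ => (1 - ρ) ^ (c + 1) * φ ρ) (Ioo (0:ℝ) 1) volume :=
    ((((cont_pow (c + 1) (by linarith)).continuousOn).mul (cont_phi c hc)).integrableOn_Icc).mono_set
      Ioo_subset_Icc_self
  have intm : IntegrableOn (fun ρ : ℝ => (1 - ρ) ^ (m + 1)) (Ioo (0:ℝ) 1) volume :=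
    ((cont_pow (m + 1) (by linarith)).continuousOn.integrableOn_Icc).mono_set Ioo_subset_Icc_self
  have intc : IntegrableOn (fun ρ : ℝ => (1 - ρ) ^ (c + 1)) (Ioo (0:ℝ) 1) volume :=
    ((cont_pow (c + 1) (by linarith)).continuousOn.integrableOn_Icc).mono_set Ioo_subset_Icc_self
  have Ic := integral_phi c hc
  have Pm := integral_one_sub_rpow (m + 1) (by linarith)
  have Pc := integral_one_sub_rpow (c + 1) (by linarith)
  rcases eq_or_lt_of_le hcm with heq | hlt
  · subst heq
    rw [ge_iff_le, Ic]
  · -- c < m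
    set lam : ℝ := (c + 1) / (m + 1) with hlamdef
    have hlam0 : 0 < lam := by positivity
    have hlam1 : lam < 1 := by
      rw [hlamdef, div_lt_one (by linarith)]; linarith
    have hmc : (0:ℝ) < m - c := by linarith
    set b : ℝ := lam ^ (1 / (m - c)) with hbdef
    have hb0 : 0 < b := Real.rpow_pos_of_pos hlam0 _
    have hb1 : b < 1 := Real.rpow_lt_one hlam0.le hlam1 (by positivity)
    set ρ₀ : ℝ := 1 - b with hρ₀def
    have hρ₀0 : 0 < ρ₀ := by simp [hρ₀def]; linarith
    have hρ₀1 : ρ₀ < 1 := by simp [hρ₀def]; linarith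
    have hpow : b ^ (m - c) = lam := by
      rw [hbdef, ← Real.rpow_mul hlam0.le, one_div, inv_mul_cancel₀ (ne_of_gt hmc),
        Real.rpow_one]
    have hφ₀pos : 0 ≤ φ ρ₀ := by
      have hu : (0:ℝ) < 1 + c * ρ₀ := by nlinarith
      simp only [hφ]
      positivity
    have hpt : ∀ ρ ∈ Ioo (0:ℝ) 1,
        φ ρ₀ * ((1 - ρ) ^ (m + 1) - lam * (1 - ρ) ^ (c + 1))
          ≤ (1 - ρ) ^ (m + 1) * φ ρ - lam * ((1 - ρ) ^ (c + 1) * φ ρ) := by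
      intro ρ hρ
      have hb' : (0:ℝ) < 1 - ρ := by linarith [hρ.2]
      have hfact : (1 - ρ) ^ (m + 1) = (1 - ρ) ^ (c + 1) * (1 - ρ) ^ (m - c) := by
        rw [← Real.rpow_add hb']; ring_nf
      have hcpos := Real.rpow_pos_of_pos hb' (c + 1)
      have hmain : φ ρ₀ * ((1 - ρ) ^ (m + 1) - lam * (1 - ρ) ^ (c + 1))
          ≤ φ ρ * ((1 - ρ) ^ (m + 1) - lam * (1 - ρ) ^ (c + 1)) := by
        rcases le_total ρ ρ₀ with hle | hge
        · have hbb : b ≤ 1 - ρ := by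
            have : ρ ≤ 1 - b := by rw [← hρ₀def]; exact hle
            linarith
          have hgm : lam ≤ (1 - ρ) ^ (m - c) := by
            calc lam = b ^ (m - c) := hpow.symm
              _ ≤ (1 - ρ) ^ (m - c) := Real.rpow_le_rpow hb0.le hbb hmc.le
          have hg : 0 ≤ (1 - ρ) ^ (m + 1) - lam * (1 - ρ) ^ (c + 1) := by
            rw [hfact]
            nlinarith
          exact mul_le_mul_of_nonneg_right (phi_anti c hc hρ.1.le hle) hg
        · have hbb : 1 - ρ ≤ b := by
            have : 1 - b ≤ ρ := by rw [← hρ₀def]; exact hge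
            linarith
          have hgm : (1 - ρ) ^ (m - c) ≤ lam := by
            calc (1 - ρ) ^ (m - c) ≤ b ^ (m - c) := Real.rpow_le_rpow hb'.le hbb hmc.le
              _ = lam := hpow
          have hg : (1 - ρ) ^ (m + 1) - lam * (1 - ρ) ^ (c + 1) ≤ 0 := by
            rw [hfact]
            nlinarith
          exact mul_le_mul_of_nonpos_right (phi_anti c hc hρ₀0.le hge) hg
      calc φ ρ₀ * ((1 - ρ) ^ (m + 1) - lam * (1 - ρ) ^ (c + 1))
          ≤ φ ρ * ((1 - ρ) ^ (m + 1) - lam * (1 - ρ) ^ (c + 1)) := hmain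
        _ = (1 - ρ) ^ (m + 1) * φ ρ - lam * ((1 - ρ) ^ (c + 1) * φ ρ) := by ring
    have hint1 : IntegrableOn
        (fun ρ => φ ρ₀ * ((1 - ρ) ^ (m + 1) - lam * (1 - ρ) ^ (c + 1))) (Ioo (0:ℝ) 1) volume :=
      (intm.sub (intc.const_mul lam)).const_mul (φ ρ₀)
    have hint2 : IntegrableOn
        (fun ρ => (1 - ρ) ^ (m + 1) * φ ρ - lam * ((1 - ρ) ^ (c + 1) * φ ρ))
        (Ioo (0:ℝ) 1) volume := intφm.sub (intφc.const_mul lam)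
    have hmono := setIntegral_mono_on hint1 hint2 measurableSet_Ioo hpt
    have hL : ∫ ρ in Ioo (0:ℝ) 1, φ ρ₀ * ((1 - ρ) ^ (m + 1) - lam * (1 - ρ) ^ (c + 1))
        = φ ρ₀ * (1 / (m + 1 + 1) - lam * (1 / (c + 1 + 1))) := by
      rw [MeasureTheory.integral_const_mul, integral_sub intm (intc.const_mul lam),
        MeasureTheory.integral_const_mul, Pm, Pc]
    have hR : ∫ ρ in Ioo (0:ℝ) 1,
        ((1 - ρ) ^ (m + 1) * φ ρ - lam * ((1 - ρ) ^ (c + 1) * φ ρ))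
        = (∫ ρ in Ioo (0:ℝ) 1, (1 - ρ) ^ (m + 1) * φ ρ) - lam * (c / (c + 1)) := by
      rw [integral_sub intφm (intφc.const_mul lam), MeasureTheory.integral_const_mul, Ic]
    rw [hL, hR] at hmono
    have hfac : 0 ≤ 1 / (m + 1 + 1) - lam * (1 / (c + 1 + 1)) := by
      rw [sub_nonneg, hlamdef, div_mul_div_comm, mul_one,
        div_le_div_iff₀ (by positivity) (by positivity)]
      nlinarith
    have hval : lam * (c / (c + 1)) = c / (m + 1) := by
      rw [hlamdef]
      field_simp
    have hnn : 0 ≤ φ ρ₀ * (1 / (m + 1 + 1) - lam * (1 / (c + 1 + 1))) :=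
      mul_nonneg hφ₀pos hfac
    rw [ge_iff_le, ← hval]
    linarith
end
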